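/- Let n ∈ ℕ and let u, v ∈ [0,1] ∩ 2^{-n}ℤ with u ≠ v. Then there exist l ∈ ℕ and points a_1,...,a_l ∈ [min(u,v), max(u,v)] ∩ 2^{-n}ℤ such that: (i) a_1 = u and a_l = v; (ii) for each i < l there exists k ∈ {0,...,n} with a_i, a_{i+1} ∈ 2^{-k}ℤ and |a_i - a_{i+1}| = 2^{-k}; (iii) for every 0 < p ≤ 1 and 0 < α < 1, (∑_{i=1}^{l-1} |a_{i+1} - a_i|^{pα})^{1/p} < 2^{1/p} (1/(1 - 2^{-pα}))^{1/p} · |u - v|^α. -/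

import Mathlib

open Real

noncomputable def pSum (s : ℝ) : List ℝ → ℝ
  | [] => 0
  | [_] => 0
  | x :: y :: t => |x - y| ^ s + pSum s (y :: t)

lemma pSum_nil (s : ℝ) : pSum s [] = 0 := rfl
lemma pSum_single (s : ℝ) (x : ℝ) : pSum s [x] = 0 := rfl
lemma pSum_cons (s x y : ℝ) (t : List ℝ) :
    pSum s (x :: y :: t) = |x - y| ^ s + pSum s (y :: t) := rfl

lemma pSum_nonneg (s : ℝ) : ∀ L : List ℝ, 0 ≤ pSum s L
  | [] => le_refl 0
  | [_] => le_refl 0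
  | x :: y :: t => add_nonneg (Real.rpow_nonneg (abs_nonneg _) _) (pSum_nonneg s (y :: t))

lemma pSum_concat (s : ℝ) : ∀ (L : List ℝ) (h : L ≠ []) (b : ℝ),
    pSum s (L ++ [b]) = pSum s L + |L.getLast h - b| ^ s
  | [], h, b => absurd rfl h
  | [x], _, b => by simp [pSum_cons, pSum_single, pSum_nil]
  | x :: y :: t, h, b => by
    have e : (x :: y :: t).getLast h = (y :: t).getLast (by simp) :=
      List.getLast_cons (by simp)
    have := pSum_concat s (y :: t) (by simp) b
    simp only [List.cons_append] at this ⊢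
    rw [pSum_cons, pSum_cons, this, e]
    ring

lemma pSum_reverse (s : ℝ) : ∀ L : List ℝ, pSum s L.reverse = pSum s L
  | [] => rfl
  | [x] => rfl
  | x :: y :: t => by
    have h1 : (x :: y :: t).reverse = (y :: t).reverse ++ [x] := by simp
    rw [h1, pSum_concat s _ (by simp) x, pSum_reverse s (y :: t), pSum_cons]
    have h2 : (y :: t).reverse.getLast (by simp) = y := by
      rw [List.getLast_reverse]
      rfl
    rw [h2, abs_sub_comm]; ring

lemma pSum_map_mul (s : ℝ) (hs : 0 < s) (c : ℝ) (hc : 0 ≤ c) :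
    ∀ L : List ℝ, pSum s (L.map (fun x => c * x)) = c ^ s * pSum s L
  | [] => by simp [pSum_nil]
  | [x] => by simp [pSum_single]
  | x :: y :: t => by
    have := pSum_map_mul s hs c hc (y :: t)
    simp only [List.map_cons] at this ⊢
    rw [pSum_cons, pSum_cons, this, ← mul_sub, abs_mul, abs_of_nonneg hc,
      Real.mul_rpow hc (abs_nonneg _)]
    ring

lemma pSum_eq_sum (s : ℝ) : ∀ L : List ℝ,
    pSum s L = ∑ i ∈ Finset.range (L.length - 1), |L.getD (i + 1) 0 - L.getD i 0| ^ s
  | [] => by simp [pSum_nil]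
  | [x] => by simp [pSum_single]
  | x :: y :: t => by
    have := pSum_eq_sum s (y :: t)
    rw [pSum_cons, this]
    have hl : (x :: y :: t).length - 1 = (t.length + 1) := by simp
    rw [hl]
    rw [Finset.sum_range_succ']
    simp only [List.getD_cons_succ, List.getD_cons_zero]
    rw [abs_sub_comm]
    have : (y :: t).length - 1 = t.length := by simp
    rw [this]
    ring

noncomputable def BB (s d : ℝ) : ℝ := 2 * ((2:ℝ) ^ s * d ^ s - 1) / ((2:ℝ) ^ s - 1)

lemma X_gt_one {s : ℝ} (hs : 0 < s) : 1 < (2:ℝ) ^ s :=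
  Real.one_lt_rpow_iff_of_pos (by norm_num) |>.2 (Or.inl ⟨one_lt_two, hs⟩)

lemma BB_mono {s : ℝ} (hs : 0 < s) {d1 d2 : ℝ} (h0 : 0 ≤ d1) (h : d1 ≤ d2) :
    BB s d1 ≤ BB s d2 := by
  unfold BB
  have hX := X_gt_one hs
  have h2 : d1 ^ s ≤ d2 ^ s := Real.rpow_le_rpow h0 h hs.le
  gcongr <;> linarith

lemma BB_double {s : ℝ} (hs : 0 < s) {d : ℝ} (h0 : 0 ≤ d) :
    (2:ℝ) ^ s * BB s d = BB s (2 * d) - 2 := by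
  have hX := X_gt_one hs
  unfold BB
  rw [Real.mul_rpow (by norm_num) h0]
  have : (2:ℝ) ^ s - 1 ≠ 0 := by linarith
  field_simp
  ring

lemma BB_one {s : ℝ} (hs : 0 < s) : BB s 1 = 2 := by
  have hX := X_gt_one hs
  unfold BB
  rw [Real.one_rpow]
  have : (2:ℝ) ^ s - 1 ≠ 0 := by linarith
  field_simp

def Step (M : ℤ) (x y : ℤ) : Prop :=
  ∃ j : ℕ, (2 ^ j : ℤ) ∣ x ∧ (2 ^ j : ℤ) ∣ y ∧ |x - y| = 2 ^ j ∧ (2 : ℤ) ^ j ≤ M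

lemma step_mono {M M' x y : ℤ} (h : M ≤ M') : Step M x y → Step M' x y := by
  rintro ⟨j, h1, h2, h3, h4⟩; exact ⟨j, h1, h2, h3, h4.trans h⟩

lemma key : ∀ d : ℕ, ∀ a b : ℤ, a < b → b - a = (d : ℤ) → ∃ L : List ℤ,
    L ≠ [] ∧ L.head? = some a ∧ L.getLast? = some b ∧
    (∀ x ∈ L, a ≤ x ∧ x ≤ b) ∧
    L.IsChain (Step (b - a)) ∧
    ∀ s : ℝ, 0 < s → pSum s (L.map (fun m : ℤ => (m : ℝ)))
      ≤ BB s d - (if Even a then 1 else 0) - (if Even b then 1 else 0) := by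
  intro d
  induction d using Nat.strong_induction_on with
  | _ d IH =>
  intro a b hab hd
  match d, hd with
  | 0, hd => omega
  | 1, hd =>
    have hb : b = a + 1 := by omega
    refine ⟨[a, b], by simp, rfl, by simp, ?_, ?_, ?_⟩
    · rintro x hx
      simp at hx
      rcases hx with rfl | rfl <;> omega
    · refine List.isChain_cons_cons.2 ⟨⟨0, one_dvd _, one_dvd _, ?_, by omega⟩, by simp⟩
      rw [hb, show a - (a+1) = -1 by ring]; simp
    · intro s hs
      have h1 : |(a:ℝ) - (b:ℝ)| = 1 := by
        rw [hb]; push_cast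
        rw [show (a:ℝ) - ((a:ℝ)+1) = -1 by ring]; simp
      have : pSum s ([a, b].map (fun m : ℤ => (m:ℝ))) = 1 := by
        simp [pSum_cons, pSum_single, h1, Real.one_rpow]
      rw [this]
      have he : Even b ↔ ¬ Even a := by rw [hb, Int.even_add_one]
      push_cast
      rw [BB_one hs]
      by_cases ha : Even a
      · have hbb : ¬ Even b := fun h => (he.1 h) ha
        simp only [if_pos ha, if_neg hbb]; norm_num
      · have hbb : Even b := he.2 ha
        simp only [if_neg ha, if_pos hbb]; norm_num
  | (d+2), hd =>
    by_cases ha : Even a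
    · by_cases hb : Even b
      · -- both even
        obtain ⟨a2, ha2⟩ := ha
        obtain ⟨b2, hb2⟩ := hb
        set D := d + 2 with hD
        have hdvd : 2 ∣ D := by omega
        set d2 := D / 2 with hd2
        have hd2' : (d2 : ℤ) = b2 - a2 := by omega
        obtain ⟨L', hne, hh, hl, hmem, hch, hsum⟩ :=
          IH d2 (by omega) a2 b2 (by omega) (by omega)
        refine ⟨L'.map (fun x => 2 * x), by simpa using hne, ?_, ?_, ?_, ?_, ?_⟩
        · rw [List.head?_map, hh]; simp; omega
        · rw [List.getLast?_map, hl]; simp; omega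
        · rintro x hx
          simp only [List.mem_map] at hx
          obtain ⟨y, hy, rfl⟩ := hx
          have := hmem y hy
          omega
        · rw [List.isChain_map]
          refine hch.imp ?_
          rintro x y ⟨j, h1, h2, h3, h4⟩
          refine ⟨j + 1, ?_, ?_, ?_, ?_⟩
          · rw [pow_succ, mul_comm]; exact mul_dvd_mul_left 2 h1
          · rw [pow_succ, mul_comm]; exact mul_dvd_mul_left 2 h2
          · rw [← mul_sub, abs_mul, h3]; norm_num; ring
          · rw [pow_succ]; omega
        · intro s hs
          have hmm : (L'.map (fun x => 2 * x)).map (fun m : ℤ => (m:ℝ))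
              = (L'.map (fun m : ℤ => (m:ℝ))).map (fun x : ℝ => 2 * x) := by
            rw [List.map_map, List.map_map]
            congr 1
            funext m
            simp only [Function.comp_apply]
            push_cast
            ring
          rw [hmm, pSum_map_mul s hs 2 (by norm_num)]
          have h1 := hsum s hs
          have hX := X_gt_one hs
          have h2 : pSum s (L'.map (fun m : ℤ => (m:ℝ))) ≤ BB s d2 := by
            have : (0:ℝ) ≤ (if Even a2 then (1:ℝ) else 0) := by positivity
            have : (0:ℝ) ≤ (if Even b2 then (1:ℝ) else 0) := by positivity
            split_ifs at h1 <;> linarith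
          have h3 : (2:ℝ) ^ s * pSum s (L'.map (fun m : ℤ => (m:ℝ)))
              ≤ (2:ℝ) ^ s * BB s d2 := by
            apply mul_le_mul_of_nonneg_left h2 (by positivity)
          have hDD : (D:ℝ) = 2 * (d2:ℝ) := by
            have : D = 2 * d2 := by omega
            rw [this]; push_cast; ring
          have h4 : (2:ℝ) ^ s * BB s d2 = BB s D - 2 := by
            rw [BB_double hs (by positivity), hDD]
          rw [if_pos ⟨a2, ha2⟩, if_pos ⟨b2, hb2⟩]
          linarith
      · -- a even, b odd
        have hab' : a < b - 1 := by omega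
        obtain ⟨L', hne, hh, hl, hmem, hch, hsum⟩ :=
          IH (d+1) (by omega) a (b-1) hab' (by omega)
        refine ⟨L' ++ [b], by simp, ?_, List.getLast?_concat, ?_, ?_, ?_⟩
        · rw [List.head?_append, hh]; rfl
        · intro x hx
          rcases List.mem_append.1 hx with h | h
          · have := hmem x h; omega
          · simp at h; omega
        · rw [List.isChain_append]
          refine ⟨hch.imp (fun x y => step_mono (by omega)), List.isChain_singleton b, ?_⟩
          intro x hx y hy
          simp at hy
          subst hy
          rw [hl] at hx
          simp at hx
          subst hx
          exact ⟨0, one_dvd _, one_dvd _, by rw [show b - 1 - b = -1 by ring]; simp, by omega⟩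
        · intro s hs
          have hLne : L'.map (fun m : ℤ => (m:ℝ)) ≠ [] := by simpa using hne
          have hlast : (L'.map (fun m : ℤ => (m:ℝ))).getLast hLne = ((b:ℝ) - 1) := by
            have h1 : L'.getLast? = some (L'.getLast hne) := List.getLast?_eq_getLast _
            have h2 : L'.getLast hne = b - 1 := by rw [h1] at hl; exact Option.some_injective _ hl
            rw [List.getLast_map]
            · rw [h2]; push_cast; ring
          have hmap : (L' ++ [b]).map (fun m : ℤ => (m:ℝ))
              = L'.map (fun m : ℤ => (m:ℝ)) ++ [(b:ℝ)] := by simp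
          rw [hmap, pSum_concat s _ hLne, hlast]
          have habs : |(b:ℝ) - 1 - (b:ℝ)| ^ s = 1 := by
            rw [show (b:ℝ) - 1 - (b:ℝ) = -1 by ring]
            simp [Real.one_rpow]
          rw [habs]
          have h1 := hsum s hs
          rw [if_pos ha, if_pos (Int.even_sub_one.2 hb)] at h1
          rw [if_pos ha, if_neg hb]
          have hmono : BB s (d+1 : ℕ) ≤ BB s (d+2 : ℕ) := by
            apply BB_mono hs (by positivity)
            push_cast; linarith
          linarith
    · -- a odd
      have hab' : a + 1 < b := by omega
      obtain ⟨L', hne, hh, hl, hmem, hch, hsum⟩ :=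
        IH (d+1) (by omega) (a+1) b hab' (by omega)
      match L', hne, hh with
      | x :: t, _, hh =>
      have hx : x = a + 1 := by simpa using hh
      subst hx
      refine ⟨a :: (a+1) :: t, by simp, rfl, ?_, ?_, ?_, ?_⟩
      · rw [List.getLast?_cons_cons]; exact hl
      · intro y hy
        rcases List.mem_cons.1 hy with rfl | hy2
        · omega
        · have := hmem y hy2; omega
      · rw [List.isChain_cons_cons]
        refine ⟨⟨0, one_dvd _, one_dvd _, by rw [show a - (a+1) = -1 by ring]; simp, by omega⟩,
          hch.imp (fun x y => step_mono (by omega))⟩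
      · intro s hs
        have hmap : (a :: (a+1) :: t).map (fun m : ℤ => (m:ℝ))
            = (a:ℝ) :: ((a+1:ℤ) :: t).map (fun m : ℤ => (m:ℝ)) := by simp
        rw [hmap]
        have hmap2 : ((a+1:ℤ) :: t).map (fun m : ℤ => (m:ℝ))
            = ((a:ℝ)+1) :: t.map (fun m : ℤ => (m:ℝ)) := by simp
        rw [hmap2, pSum_cons]
        have habs : |(a:ℝ) - ((a:ℝ)+1)| ^ s = 1 := by
          rw [show (a:ℝ) - ((a:ℝ)+1) = -1 by ring]
          simp [Real.one_rpow]
        rw [habs]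
        have h1 := hsum s hs
        rw [hmap2] at h1
        rw [if_pos (Int.even_add_one.2 ha)] at h1
        rw [if_neg ha]
        have hmono : BB s (d+1 : ℕ) ≤ BB s (d+2 : ℕ) := by
          apply BB_mono hs (by positivity)
          push_cast; linarith
        have hpb : (0:ℝ) ≤ (if Even b then (1:ℝ) else 0) := by positivity
        split_ifs at h1 ⊢ <;> linarith

lemma step_symm {M x y : ℤ} : Step M x y → Step M y x := by
  rintro ⟨j, h1, h2, h3, h4⟩; exact ⟨j, h2, h1, by rwa [abs_sub_comm], h4⟩

lemma BB_lt {s : ℝ} (hs : 0 < s) {D : ℝ} (hD : 0 ≤ D) :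
    BB s D < 2 * (2:ℝ) ^ s * D ^ s / ((2:ℝ) ^ s - 1) := by
  have hX := X_gt_one hs
  have h1 : (2:ℝ) ^ s - 1 ≠ 0 := by linarith
  have h2 : 2 * (2:ℝ) ^ s * D ^ s / ((2:ℝ) ^ s - 1) - BB s D = 2 / ((2:ℝ) ^ s - 1) := by
    unfold BB; field_simp; ring
  have h3 : (0:ℝ) < 2 / ((2:ℝ) ^ s - 1) := by
    apply div_pos <;> linarith
  linarith

lemma key2 (a b : ℤ) (hab : a ≠ b) : ∃ L : List ℤ,
    L ≠ [] ∧ L.head? = some a ∧ L.getLast? = some b ∧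
    (∀ x ∈ L, min a b ≤ x ∧ x ≤ max a b) ∧
    L.IsChain (Step |b - a|) ∧
    ∀ s : ℝ, 0 < s → pSum s (L.map (fun m : ℤ => (m : ℝ)))
      < 2 * (2:ℝ) ^ s * |(b:ℝ) - (a:ℝ)| ^ s / ((2:ℝ) ^ s - 1) := by
  have main : ∀ a b : ℤ, a < b → ∃ L : List ℤ,
      L ≠ [] ∧ L.head? = some a ∧ L.getLast? = some b ∧
      (∀ x ∈ L, a ≤ x ∧ x ≤ b) ∧
      L.IsChain (Step |b - a|) ∧
      ∀ s : ℝ, 0 < s → pSum s (L.map (fun m : ℤ => (m : ℝ)))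
        < 2 * (2:ℝ) ^ s * |(b:ℝ) - (a:ℝ)| ^ s / ((2:ℝ) ^ s - 1) := by
    intro a b hlt
    obtain ⟨L, hne, hh, hl, hmem, hch, hsum⟩ := key (b - a).toNat a b hlt (by omega)
    refine ⟨L, hne, hh, hl, hmem, ?_, ?_⟩
    · rwa [abs_of_pos (by omega : (0:ℤ) < b - a)]
    · intro s hs
      have h1 := hsum s hs
      have hDr : (((b - a).toNat : ℕ) : ℝ) = |(b:ℝ) - (a:ℝ)| := by
        rw [abs_of_pos (show (0:ℝ) < (b:ℝ) - a by exact_mod_cast (by omega : (0:ℤ) < b - a))]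
        exact_mod_cast (by omega : ((b - a).toNat : ℤ) = b - a)
      have h2 : BB s ((b - a).toNat : ℕ) < 2 * (2:ℝ) ^ s * |(b:ℝ) - (a:ℝ)| ^ s / ((2:ℝ) ^ s - 1) := by
        rw [hDr]; exact BB_lt hs (abs_nonneg _)
      have hp1 : (0:ℝ) ≤ (if Even a then (1:ℝ) else 0) := by positivity
      have hp2 : (0:ℝ) ≤ (if Even b then (1:ℝ) else 0) := by positivity
      linarith
  rcases lt_or_gt_of_ne hab with h | h
  · obtain ⟨L, hne, hh, hl, hmem, hch, hsum⟩ := main a b h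
    refine ⟨L, hne, hh, hl, ?_, hch, hsum⟩
    intro x hx
    have := hmem x hx
    constructor
    · exact le_trans (min_le_left _ _) this.1
    · exact le_trans this.2 (le_max_right _ _)
  · obtain ⟨L, hne, hh, hl, hmem, hch, hsum⟩ := main b a h
    refine ⟨L.reverse, by simpa using hne, ?_, ?_, ?_, ?_, ?_⟩
    · rw [List.head?_reverse, hl]
    · rw [List.getLast?_reverse, hh]
    · intro x hx
      have := hmem x (List.mem_reverse.1 hx)
      constructor
      · exact le_trans (min_le_right _ _) this.1
      · exact le_trans this.2 (le_max_left _ _)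
    · rw [List.isChain_reverse]
      have : Step |b - a| = Step |a - b| := by rw [abs_sub_comm]
      rw [this]
      exact hch.imp (fun x y h => step_symm h)
    · intro s hs
      rw [List.map_reverse, pSum_reverse]
      have := hsum s hs
      rwa [abs_sub_comm (b:ℝ)]

lemma getD_lt {α : Type*} (L : List α) (d : α) {i : ℕ} (h : i < L.length) :
    L.getD i d = L[i] := by
  simp [List.getD_eq_getElem?_getD, List.getElem?_eq_getElem h]

/-- Dyadic chain decomposition of a segment with controlled α-Hölder total length. -/
theorem stmt4 (n : ℕ) (u v : ℝ)
    (hu : u ∈ Set.Icc (0 : ℝ) 1) (hv : v ∈ Set.Icc (0 : ℝ) 1)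
    (hud : ∃ m : ℤ, u = 2 ^ (-(n : ℤ)) * m) (hvd : ∃ m : ℤ, v = 2 ^ (-(n : ℤ)) * m)
    (huv : u ≠ v) :
    ∃ (l : ℕ) (a : ℕ → ℝ), 1 ≤ l ∧
      (∀ i < l, a i ∈ Set.Icc (min u v) (max u v) ∧ ∃ m : ℤ, a i = 2 ^ (-(n : ℤ)) * m) ∧
      a 0 = u ∧ a (l - 1) = v ∧
      (∀ i, i + 1 < l → ∃ k ≤ n, (∃ m : ℤ, a i = 2 ^ (-(k : ℤ)) * m) ∧
        (∃ m : ℤ, a (i + 1) = 2 ^ (-(k : ℤ)) * m) ∧ |a i - a (i + 1)| = 2 ^ (-(k : ℤ))) ∧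
      ∀ p α : ℝ, 0 < p → p ≤ 1 → 0 < α → α < 1 →
        (∑ i ∈ Finset.range (l - 1), |a (i + 1) - a i| ^ (p * α)) ^ (1 / p)
          < 2 ^ ((1 : ℝ) / p) * (1 / (1 - (2 : ℝ) ^ (-(p * α)))) ^ (1 / p) * |u - v| ^ α := by
  obtain ⟨mu, hmu⟩ := hud
  obtain ⟨mv, hmv⟩ := hvd
  set c : ℝ := (2:ℝ) ^ (-(n : ℤ)) with hc
  have hcpos : 0 < c := by positivity
  have hmune : mu ≠ mv := by
    rintro rfl; exact huv (hmu.trans hmv.symm)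
  obtain ⟨L, hne, hh, hl, hmem, hch, hsum⟩ := key2 mu mv hmune
  -- bounds on mu, mv
  have hc2n : c * ((2:ℝ) ^ (n:ℕ)) = 1 := by
    rw [hc, show ((2:ℝ) ^ (n:ℕ)) = (2:ℝ) ^ ((n:ℕ):ℤ) from (zpow_natCast 2 n).symm,
      ← zpow_add₀ (by norm_num : (2:ℝ) ≠ 0)]
    norm_num
  have hmub : 0 ≤ mu ∧ mu ≤ 2 ^ n := by
    constructor
    · have h0 : (0:ℝ) ≤ c * mu := hmu ▸ hu.1
      have : (0:ℝ) ≤ (mu:ℝ) := nonneg_of_mul_nonneg_right (by linarith [h0]) hcpos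
      exact_mod_cast this
    · have h0 : c * (mu:ℝ) ≤ c * ((2:ℝ) ^ (n:ℕ)) := by
        rw [hc2n]; exact hmu ▸ hu.2
      have : (mu:ℝ) ≤ (2:ℝ) ^ (n:ℕ) := le_of_mul_le_mul_left h0 hcpos
      exact_mod_cast this
  have hmvb : 0 ≤ mv ∧ mv ≤ 2 ^ n := by
    constructor
    · have h0 : (0:ℝ) ≤ c * mv := hmv ▸ hv.1
      have : (0:ℝ) ≤ (mv:ℝ) := nonneg_of_mul_nonneg_right (by linarith [h0]) hcpos
      exact_mod_cast this
    · have h0 : c * (mv:ℝ) ≤ c * ((2:ℝ) ^ (n:ℕ)) := by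
        rw [hc2n]; exact hmv ▸ hv.2
      have : (mv:ℝ) ≤ (2:ℝ) ^ (n:ℕ) := le_of_mul_le_mul_left h0 hcpos
      exact_mod_cast this
  have hDbound : |mv - mu| ≤ 2 ^ n := by
    rw [abs_sub_le_iff]; omega
  -- the real list
  set R : List ℝ := L.map (fun m : ℤ => c * (m : ℝ)) with hR
  have hRlen : R.length = L.length := List.length_map _
  have hRne : R ≠ [] := by simp [hR, hne]
  have hLpos : 0 < L.length := List.length_pos_iff.2 hne
  refine ⟨R.length, fun i => R.getD i 0, ?_, ?_, ?_, ?_, ?_, ?_⟩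
  · rw [hRlen]; omega
  · intro i hi
    rw [hRlen] at hi
    show R.getD i 0 ∈ Set.Icc (min u v) (max u v) ∧ ∃ m : ℤ, R.getD i 0 = 2 ^ (-(n:ℤ)) * m
    have hgd : R.getD i 0 = c * ((L.get ⟨i, hi⟩ : ℤ) : ℝ) := by
      rw [getD_lt R 0 (by rw [hRlen]; exact hi)]
      simp [hR]
    have hmemi := hmem _ (L.get_mem ⟨i, hi⟩)
    refine ⟨Set.mem_Icc.2 ⟨?_, ?_⟩, ⟨L.get ⟨i, hi⟩, hgd⟩⟩
    · rw [hgd]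
      rcases le_total mu mv with h | h
      · have hm : min u v = u := min_eq_left (by
          rw [hmu, hmv]
          exact mul_le_mul_of_nonneg_left (by exact_mod_cast h) hcpos.le)
        rw [hm, hmu]
        apply mul_le_mul_of_nonneg_left _ hcpos.le
        have h2 := hmemi.1
        rw [min_eq_left h] at h2
        exact_mod_cast h2
      · have hm : min u v = v := min_eq_right (by
          rw [hmu, hmv]
          exact mul_le_mul_of_nonneg_left (by exact_mod_cast h) hcpos.le)
        rw [hm, hmv]
        apply mul_le_mul_of_nonneg_left _ hcpos.le
        have h2 := hmemi.1
        rw [min_eq_right h] at h2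
        exact_mod_cast h2
    · rw [hgd]
      rcases le_total mu mv with h | h
      · have hm : max u v = v := max_eq_right (by
          rw [hmu, hmv]
          exact mul_le_mul_of_nonneg_left (by exact_mod_cast h) hcpos.le)
        rw [hm, hmv]
        apply mul_le_mul_of_nonneg_left _ hcpos.le
        have h2 := hmemi.2
        rw [max_eq_right h] at h2
        exact_mod_cast h2
      · have hm : max u v = u := max_eq_left (by
          rw [hmu, hmv]
          exact mul_le_mul_of_nonneg_left (by exact_mod_cast h) hcpos.le)
        rw [hm, hmu]
        apply mul_le_mul_of_nonneg_left _ hcpos.le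
        have h2 := hmemi.2
        rw [max_eq_left h] at h2
        exact_mod_cast h2
  · -- a 0 = u
    have h0 : (0:ℕ) < R.length := by rw [hRlen]; exact hLpos
    show R.getD 0 0 = u
    rw [getD_lt R 0 h0, List.getElem_zero h0]
    have h1 : R.head? = some (c * (mu:ℝ)) := by
      rw [hR, List.head?_map, hh]; rfl
    rw [List.head?_eq_head hRne] at h1
    rw [Option.some_inj] at h1
    rw [h1, hmu]
  · -- a (l-1) = v
    have h0 : R.length - 1 < R.length := by omega
    show R.getD (R.length - 1) 0 = v
    rw [getD_lt R 0 h0, ← List.getLast_eq_getElem hRne]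
    have h1 : R.getLast? = some (c * (mv:ℝ)) := by
      rw [hR, List.getLast?_map, hl]; rfl
    rw [List.getLast?_eq_getLast hRne] at h1
    rw [Option.some_inj] at h1
    rw [h1, hmv]
  · -- chain condition
    intro i hi1
    rw [hRlen] at hi1
    have hi : i < L.length := by omega
    have hi' : i + 1 < L.length := hi1
    have hstep := List.isChain_iff_getElem.1 hch i (by omega)
    obtain ⟨j, hj1, hj2, hj3, hj4⟩ := hstep
    have hjn : j ≤ n := by
      have h2 : (2:ℤ) ^ j ≤ 2 ^ n := le_trans hj4 hDbound
      exact_mod_cast Nat.pow_le_pow_iff_right (by norm_num : 1 < 2) |>.1 (by exact_mod_cast h2)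
    have hkz : ((n - j : ℕ) : ℤ) = (n:ℤ) - (j:ℤ) := by omega
    have hpow : c * ((2:ℝ) ^ (j:ℕ)) = (2:ℝ) ^ (-((n - j : ℕ) : ℤ)) := by
      rw [hc, show ((2:ℝ) ^ (j:ℕ)) = (2:ℝ) ^ ((j:ℕ):ℤ) from (zpow_natCast 2 j).symm,
        ← zpow_add₀ (by norm_num : (2:ℝ) ≠ 0)]
      congr 1
      omega
    have hgd : ∀ m (hm : m < L.length), R.getD m 0 = c * ((L.get ⟨m, hm⟩ : ℤ) : ℝ) := by
      intro m hm
      rw [getD_lt R 0 (by rw [hRlen]; exact hm)]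
      simp [hR]
    refine ⟨n - j, by omega, ?_, ?_, ?_⟩
    · obtain ⟨m, hm⟩ := hj1
      refine ⟨m, ?_⟩
      show R.getD i 0 = _
      rw [hgd i hi, show (L.get ⟨i, hi⟩ : ℤ) = 2 ^ j * m from hm]
      push_cast
      rw [← mul_assoc, hpow]
    · obtain ⟨m, hm⟩ := hj2
      refine ⟨m, ?_⟩
      show R.getD (i+1) 0 = _
      rw [hgd (i+1) hi', show (L.get ⟨i+1, hi'⟩ : ℤ) = 2 ^ j * m from hm]
      push_cast
      rw [← mul_assoc, hpow]
    · show |R.getD i 0 - R.getD (i+1) 0| = _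
      rw [hgd i hi, hgd (i+1) hi', ← mul_sub, abs_mul, abs_of_pos hcpos]
      have : |(L.get ⟨i, hi⟩ : ℝ) - (L.get ⟨i+1, hi'⟩ : ℝ)|
          = (((2:ℤ) ^ j : ℤ) : ℝ) := by
        rw [← hj3]
        push_cast [Int.cast_abs]
        ring_nf
        rfl
      rw [this]
      push_cast
      rw [hpow]
  · -- sum bound
    intro p α hp hp1 hα hα1
    have hs : 0 < p * α := mul_pos hp hα
    set s := p * α with hsdef
    have hX := X_gt_one hs
    have hT := hsum s hs
    set T := pSum s (L.map (fun m : ℤ => (m:ℝ))) with hTdef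
    set D : ℝ := |(mv:ℝ) - (mu:ℝ)| with hDdef
    have hRmap : R = (L.map (fun m : ℤ => (m:ℝ))).map (fun x : ℝ => c * x) := by
      rw [hR, List.map_map]
      rfl
    have hS : ∑ i ∈ Finset.range (R.length - 1), |R.getD (i+1) 0 - R.getD i 0| ^ s
        = c ^ s * T := by
      rw [(pSum_eq_sum s R).symm, hRmap, pSum_map_mul s hs c hcpos.le]
    show (∑ i ∈ Finset.range (R.length - 1), |R.getD (i+1) 0 - R.getD i 0| ^ s) ^ (1/p) < _
    rw [hS]
    have h2s0 : ((2:ℝ) ^ s) ≠ 0 := by positivity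
    have h2s1 : (2:ℝ) ^ s - 1 ≠ 0 := by linarith
    have hneg1 : (2:ℝ) ^ (-s) < 1 := by
      rw [Real.rpow_neg (by norm_num : (0:ℝ) ≤ 2)]
      rw [inv_lt_one_iff₀]
      right; exact hX
    have hnegpos : 0 < 1 - (2:ℝ) ^ (-s) := by linarith
    have hQ : c ^ s * T < 2 * (1 / (1 - (2:ℝ) ^ (-s))) * |u - v| ^ s := by
      have h1 : c ^ s * T < c ^ s * (2 * (2:ℝ)^s * D ^ s / ((2:ℝ)^s - 1)) :=
        mul_lt_mul_of_pos_left hT (Real.rpow_pos_of_pos hcpos s)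
      have huvd : |u - v| = c * D := by
        rw [hmu, hmv, ← mul_sub, abs_mul, abs_of_pos hcpos, hDdef, abs_sub_comm]
      have h2 : |u - v| ^ s = c ^ s * D ^ s := by
        rw [huvd, Real.mul_rpow hcpos.le (abs_nonneg _)]
      have h3 : 1 - (2:ℝ) ^ (-s) = ((2:ℝ)^s - 1) / (2:ℝ)^s := by
        rw [Real.rpow_neg (by norm_num : (0:ℝ) ≤ 2)]
        field_simp
      have h4 : 2 * (1 / (1 - (2:ℝ)^(-s))) * |u - v| ^ s
          = c ^ s * (2 * (2:ℝ)^s * D ^ s / ((2:ℝ)^s - 1)) := by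
        rw [h2, h3]
        field_simp
      rw [h4]
      exact h1
    have hSnn : 0 ≤ c ^ s * T :=
      mul_nonneg (Real.rpow_pos_of_pos hcpos s).le (pSum_nonneg s _)
    have hfin := Real.rpow_lt_rpow hSnn hQ (by positivity : (0:ℝ) < 1/p)
    refine lt_of_lt_of_le hfin (le_of_eq ?_)
    have hpos2 : (0:ℝ) ≤ 1/(1 - (2:ℝ)^(-s)) := by positivity
    rw [Real.mul_rpow (by positivity) (Real.rpow_nonneg (abs_nonneg _) s),
      Real.mul_rpow (by norm_num : (0:ℝ) ≤ 2) hpos2,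
      ← Real.rpow_mul (abs_nonneg (u - v))]
    rw [show s * (1/p) = α by rw [hsdef]; field_simp]
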